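/- Let φ : Σ_A → ℝ be d-Hölder continuous, let L_φ be the Perron–Frobenius–Ruelle operator, and let λ > 0 and the Borel probability measure μ be the unique pair with ∫ L_φ f dμ = λ ∫ f dμ for all continuous f. Then there exists a unique continuous, strictly positive function h : Σ_A → ℝ such that L_φ h = λ h and ∫_{Σ_A} h dμ = 1. -/

import Mathlib

open MeasureTheory Filter
open scoped ENNReal NNReal

namespace SFT

variable {l : ℕ}

/-- The one-sided subshift of finite type determined by the `l × l` matrix `A`:
infinite sequences with transitions allowed by `A`. -/
abbrev SigmaA (l : ℕ) (A : Matrix (Fin l) (Fin l) ℕ) : Type :=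
  {ω : ℕ → Fin l // ∀ k, A (ω k) (ω (k + 1)) = 1}

/-- The left shift `σ` on `SigmaA l A`. -/
def shift {A : Matrix (Fin l) (Fin l) ℕ} (ω : SigmaA l A) : SigmaA l A :=
  ⟨fun n => ω.1 (n + 1), fun k => ω.2 (k + 1)⟩

/-- Birkhoff sums `S_k φ = ∑_{m<k} φ ∘ σ^m`. -/
def birkhoff {A : Matrix (Fin l) (Fin l) ℕ} (φ : SigmaA l A → ℝ) (k : ℕ) (ω : SigmaA l A) : ℝ :=
  ∑ m ∈ Finset.range k, φ (shift^[m] ω)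

/-- The matrix `A` has `0`-`1` entries and is irreducible and aperiodic
(some power of `A` has all entries strictly positive). -/
def Primitive (A : Matrix (Fin l) (Fin l) ℕ) : Prop :=
  (∀ i j, A i j = 0 ∨ A i j = 1) ∧ ∃ n : ℕ, 0 < n ∧ ∀ i j, 0 < (A ^ n) i j

/-- A finite word is admissible, i.e. belongs to `Σ_A^*`. -/
def Admissible (A : Matrix (Fin l) (Fin l) ℕ) (x : List (Fin l)) : Prop :=
  x ≠ [] ∧ ∀ (i : ℕ) (h : i + 1 < x.length), A (x[i]'(by omega)) (x[i + 1]'h) = 1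

/-- The cylinder set `[x]` of a finite word (the empty word gives all of `Σ_A`). -/
def cylinder (A : Matrix (Fin l) (Fin l) ℕ) (x : List (Fin l)) : Set (SigmaA l A) :=
  {ω | ∀ (i : ℕ) (h : i < x.length), ω.1 i = x[i]'h}

/-- The initial word `(ω_1, …, ω_k)` of `ω`. -/
def wordPrefix {A : Matrix (Fin l) (Fin l) ℕ} (ω : SigmaA l A) (k : ℕ) : List (Fin l) :=
  List.ofFn (fun i : Fin k => ω.1 i)

/-- `μ` is a Gibbs measure for the potential `φ` with pressure `P`:
`c⁻¹ ≤ μ([ω_1,…,ω_k]) / exp(S_kφ(ω) − kP) ≤ c` for some `c > 1`. -/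
def IsGibbs {A : Matrix (Fin l) (Fin l) ℕ} (φ : SigmaA l A → ℝ) (P : ℝ)
    (μ : Measure (SigmaA l A)) : Prop :=
  ∃ c : ℝ, 1 < c ∧ ∀ (ω : SigmaA l A) (k : ℕ), 0 < k →
    c⁻¹ ≤ (μ (cylinder A (wordPrefix ω k))).toReal / Real.exp (birkhoff φ k ω - k * P) ∧
      (μ (cylinder A (wordPrefix ω k))).toReal / Real.exp (birkhoff φ k ω - k * P) ≤ c

/-- `φ` is Hölder continuous with respect to the metric `d(ω,υ) = 2^{-(ω ∧ υ)}`: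
there are `C` and an exponent `s > 0` with `|φ(ω) − φ(υ)| ≤ C ⬝ d(ω,υ)^s`, i.e.
`|φ(ω) − φ(υ)| ≤ C ⬝ 2^{-sn}` whenever `ω` and `υ` agree in their first `n` coordinates. -/
def HolderCont {A : Matrix (Fin l) (Fin l) ℕ} (φ : SigmaA l A → ℝ) : Prop :=
  ∃ C s : ℝ, 0 < s ∧ ∀ (ω υ : SigmaA l A) (n : ℕ),
    (∀ i < n, ω.1 i = υ.1 i) → |φ ω - φ υ| ≤ C * (2 : ℝ) ^ (-(s * n))

/-- Prepending a letter `a` to a sequence `ω` (an admissible preimage of `ω` under the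
shift). -/
def consSeq {A : Matrix (Fin l) (Fin l) ℕ} (a : Fin l) (ω : SigmaA l A)
    (h : A a (ω.1 0) = 1) : SigmaA l A :=
  ⟨fun n => match n with
    | 0 => a
    | (k + 1) => ω.1 k,
   by
    intro k
    match k with
    | 0 => exact h
    | (m + 1) => exact ω.2 m⟩

/-- The Perron-Frobenius-Ruelle operator `(L_φ f)(ω) = ∑_{σ(υ)=ω} e^{φ(υ)} f(υ)`. -/
noncomputable def transferOp (A : Matrix (Fin l) (Fin l) ℕ) (φ : SigmaA l A → ℝ)
    (f : SigmaA l A → ℝ) : SigmaA l A → ℝ := fun ω =>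
  ∑ a : Fin l, if h : A a (ω.1 0) = 1 then
    Real.exp (φ (consSeq a ω h)) * f (consSeq a ω h) else 0

/-! ### Auxiliary development -/

section Aux

variable {A : Matrix (Fin l) (Fin l) ℕ}

theorem isClosed_sigmaSet (A : Matrix (Fin l) (Fin l) ℕ) :
    IsClosed {ω : ℕ → Fin l | ∀ k, A (ω k) (ω (k + 1)) = 1} := by
  have : {ω : ℕ → Fin l | ∀ k, A (ω k) (ω (k + 1)) = 1} =
      ⋂ k, {ω : ℕ → Fin l | A (ω k) (ω (k+1)) = 1} := by ext; simp [Set.mem_iInter]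
  rw [this]
  refine isClosed_iInter fun k => ?_
  have hc : Continuous fun ω : ℕ → Fin l => (A (ω k) (ω (k+1))) :=
    Continuous.comp (continuous_of_discreteTopology (α := Fin l × Fin l)
      (f := fun p => A p.1 p.2)) (Continuous.prodMk (continuous_apply k) (continuous_apply (k+1)))
  exact isClosed_eq hc continuous_const

instance : CompactSpace (SigmaA l A) :=
  isCompact_iff_compactSpace.mp ((isClosed_sigmaSet A).isCompact)

instance : BorelSpace (SigmaA l A) := by
  have : MeasurableSet {ω : ℕ → Fin l | ∀ k, A (ω k) (ω (k + 1)) = 1} :=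
    (isClosed_sigmaSet A).measurableSet
  exact Subtype.borelSpace _

/-- every row of a primitive matrix has a `1` -/
theorem row_one (hA : Primitive A) (i : Fin l) : ∃ j, A i j = 1 := by
  obtain ⟨h01, n, hn, hpos⟩ := hA
  have h := hpos i i
  obtain ⟨m, rfl⟩ : ∃ m, n = m + 1 := ⟨n - 1, by omega⟩
  rw [pow_succ'] at h
  rw [Matrix.mul_apply] at h
  obtain ⟨b, hb⟩ : ∃ b, 0 < A i b * (A ^ m) b i := by
    by_contra hcon
    push_neg at hcon
    simp only [Nat.le_zero] at hcon
    simp [Finset.sum_eq_zero fun b _ => hcon b] at h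
  refine ⟨b, ?_⟩
  rcases h01 i b with h0 | h1
  · simp [h0] at hb
  · exact h1

/-- a successor function -/
noncomputable def nextLetter (hA : Primitive A) (i : Fin l) : Fin l :=
  (row_one hA i).choose

theorem nextLetter_spec (hA : Primitive A) (i : Fin l) : A i (nextLetter hA i) = 1 :=
  (row_one hA i).choose_spec

/-- from any letter there is a point of `Σ_A` starting with it -/
noncomputable def headSeq (hA : Primitive A) (j : Fin l) : SigmaA l A :=
  ⟨fun k => (nextLetter hA)^[k] j, by
    intro k
    show A ((nextLetter hA)^[k] j) ((nextLetter hA)^[k+1] j) = 1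
    rw [Function.iterate_succ_apply']
    exact nextLetter_spec hA _⟩

theorem headSeq_head (hA : Primitive A) (j : Fin l) : (headSeq hA j).1 0 = j := rfl

theorem nonempty_sigmaA (hA : Primitive A) (hl : 2 ≤ l) : Nonempty (SigmaA l A) :=
  ⟨headSeq hA ⟨0, by omega⟩⟩

end Aux
section Paths

variable {A : Matrix (Fin l) (Fin l) ℕ}

theorem shift_iterate_apply {A : Matrix (Fin l) (Fin l) ℕ} (ω : SigmaA l A) (m i : ℕ) :
    (shift^[m] ω).1 i = ω.1 (i + m) := by
  induction m generalizing ω i with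
  | zero => rfl
  | succ n ih =>
    rw [Function.iterate_succ_apply, ih (shift ω) i]
    show ω.1 (i + n + 1) = ω.1 (i + (n + 1))
    ring_nf

/-- extract an admissible path from positivity of a matrix power entry -/
theorem path_of_pow (h01 : ∀ i j, A i j = 0 ∨ A i j = 1) :
    ∀ (n : ℕ) (i j : Fin l), 0 < (A ^ n) i j →
      ∃ c : ℕ → Fin l, c 0 = i ∧ c n = j ∧ ∀ k < n, A (c k) (c (k + 1)) = 1 := by
  intro n
  induction n with
  | zero =>
    intro i j h
    rw [pow_zero, Matrix.one_apply] at h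
    split at h
    · exact ⟨fun _ => i, rfl, by simp_all, by simp⟩
    · simp at h
  | succ n ih =>
    intro i j h
    rw [pow_succ, Matrix.mul_apply] at h
    obtain ⟨b, hb⟩ : ∃ b, 0 < (A ^ n) i b * A b j := by
      by_contra hcon
      push_neg at hcon
      simp only [Nat.le_zero] at hcon
      simp [Finset.sum_eq_zero fun b _ => hcon b] at h
    have hb1 : 0 < (A ^ n) i b := by
      rcases Nat.eq_zero_or_pos ((A ^ n) i b) with h0 | h
      · simp [h0] at hb
      · exact h
    have hb2 : A b j = 1 := by
      rcases h01 b j with h0 | h1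
      · simp [h0] at hb
      · exact h1
    obtain ⟨c, hc0, hcn, hcs⟩ := ih i b hb1
    refine ⟨fun k => if k ≤ n then c k else j, by simp [hc0], by simp, ?_⟩
    intro k hk
    rcases Nat.lt_or_ge k n with h | h
    · simp only [if_pos (Nat.le_of_lt h), if_pos (Nat.succ_le_of_lt h)]
      exact hcs k h
    · have hkn : k = n := by omega
      subst hkn
      simp only [le_refl, if_pos, if_neg (by omega : ¬ k + 1 ≤ k)]
      rw [hcn]
      exact hb2

end Paths
section Glue

variable {A : Matrix (Fin l) (Fin l) ℕ}

/-- Concatenate an admissible word `c 0, …, c (n-1)` with a point `ω` whose head matches `c n`. -/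
def glue (c : ℕ → Fin l) (n : ℕ) (ω : SigmaA l A)
    (hc : ∀ k < n, A (c k) (c (k + 1)) = 1) (hlast : c n = ω.1 0) : SigmaA l A :=
  ⟨fun k => if k < n then c k else ω.1 (k - n), by
    intro k
    show A (if k < n then c k else ω.1 (k - n)) (if k + 1 < n then c (k + 1) else ω.1 (k + 1 - n)) = 1
    rcases Nat.lt_or_ge (k + 1) n with h | h
    · rw [if_pos (by omega), if_pos h]
      exact hc k (by omega)
    · rcases Nat.lt_or_ge k n with h2 | h2
      · have : k + 1 = n := by omega
        rw [if_pos h2, if_neg (by omega)]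
        have : c (k+1) = ω.1 (k + 1 - n) := by rw [this, Nat.sub_self]; exact hlast
        rw [← this]
        exact hc k h2
      · rw [if_neg (by omega), if_neg (by omega)]
        have h3 : k + 1 - n = (k - n) + 1 := by omega
        rw [h3]
        exact ω.2 (k - n)⟩

theorem glue_prefix (c : ℕ → Fin l) (n : ℕ) (ω : SigmaA l A) (hc) (hlast) (i : ℕ) (hi : i < n) :
    (glue c n ω hc hlast).1 i = c i := if_pos hi

theorem glue_shift (c : ℕ → Fin l) (n : ℕ) (ω : SigmaA l A) (hc) (hlast) :
    shift^[n] (glue c n ω hc hlast) = ω := by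
  apply Subtype.ext
  funext i
  rw [shift_iterate_apply]
  show (if i + n < n then c (i+n) else ω.1 (i + n - n)) = ω.1 i
  rw [if_neg (by omega)]
  have h : i + n - n = i := by omega
  rw [h]

theorem glue_head (c : ℕ → Fin l) (n : ℕ) (ω : SigmaA l A) (hc) (hlast) :
    (glue c n ω hc hlast).1 0 = c 0 := by
  rcases Nat.eq_zero_or_pos n with h | h
  · subst h; show (if 0 < 0 then c 0 else ω.1 (0 - 0)) = c 0; simpa using hlast.symm
  · exact glue_prefix c n ω hc hlast 0 h

end Glue
section Topology

variable {A : Matrix (Fin l) (Fin l) ℕ}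

/-- evaluation maps are continuous -/
theorem continuous_eval (i : ℕ) : Continuous fun ω : SigmaA l A => ω.1 i :=
  (continuous_apply i).comp continuous_subtype_val

theorem isOpen_agree (x : ℕ → Fin l) (n : ℕ) :
    IsOpen {υ : SigmaA l A | ∀ i < n, υ.1 i = x i} := by
  have : {υ : SigmaA l A | ∀ i < n, υ.1 i = x i} =
      ⋂ i ∈ Finset.range n, {υ : SigmaA l A | υ.1 i = x i} := by
    ext υ; simp
  rw [this]
  refine isOpen_biInter_finset fun i _ => ?_
  exact IsOpen.preimage (continuous_eval i) (isOpen_discrete {x i})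

theorem agree_mem_nhds (ω : SigmaA l A) (n : ℕ) :
    {υ : SigmaA l A | ∀ i < n, υ.1 i = ω.1 i} ∈ nhds ω :=
  (isOpen_agree _ n).mem_nhds (fun i _ => rfl)

theorem continuous_of_holder {φ : SigmaA l A → ℝ} (hφ : HolderCont φ) : Continuous φ := by
  obtain ⟨C, s, hs, hC⟩ := hφ
  rw [continuous_iff_continuousAt]
  intro ω
  unfold ContinuousAt
  rw [Metric.tendsto_nhds]
  intro ε hε
  -- choose n with C * 2^(-(s*n)) < ε
  obtain ⟨n, hn⟩ : ∃ n : ℕ, C * (2:ℝ) ^ (-(s * n)) < ε := by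
    have h2 : Filter.Tendsto (fun n : ℕ => C * (2:ℝ) ^ (-(s * n))) Filter.atTop (nhds 0) := by
      have : Filter.Tendsto (fun n : ℕ => (2:ℝ) ^ (-(s * n))) Filter.atTop (nhds 0) := by
        have hb : ∀ n : ℕ, (2:ℝ) ^ (-(s * n)) = ((2:ℝ) ^ (-s)) ^ n := by
          intro n
          rw [← Real.rpow_natCast ((2:ℝ) ^ (-s)) n, ← Real.rpow_mul (by norm_num)]
          ring_nf
        simp only [hb]
        apply tendsto_pow_atTop_nhds_zero_of_lt_one
        · positivity
        · rw [Real.rpow_neg (by norm_num)]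
          rw [inv_lt_one_iff₀]
          right
          exact Real.one_lt_rpow_iff_of_pos (by norm_num) |>.mpr (by norm_num [hs])
      simpa using this.const_mul C
    exact ((h2.eventually (gt_mem_nhds hε)).exists)
  filter_upwards [agree_mem_nhds ω n] with υ hυ
  rw [Real.dist_eq]
  calc |φ υ - φ ω| ≤ C * (2:ℝ) ^ (-(s * n)) := hC υ ω n hυ
    _ < ε := hn

end Topology
section TransferContinuity

variable {A : Matrix (Fin l) (Fin l) ℕ}

theorem consSeq_head (a : Fin l) (ω : SigmaA l A) (h : A a (ω.1 0) = 1) :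
    (consSeq a ω h).1 0 = a := rfl

theorem consSeq_tail (a : Fin l) (ω : SigmaA l A) (h : A a (ω.1 0) = 1) (k : ℕ) :
    (consSeq a ω h).1 (k + 1) = ω.1 k := rfl

/-- underlying sequence of `consSeq`, as a total continuous map -/
def consVal (a : Fin l) : SigmaA l A → (ℕ → Fin l) := fun ω n =>
  match n with
  | 0 => a
  | (k + 1) => ω.1 k

theorem continuous_consVal (a : Fin l) : Continuous (consVal (A := A) a) := by
  apply continuous_pi
  intro n
  match n with
  | 0 => exact continuous_const
  | (k + 1) => exact continuous_eval k

theorem consSeq_val (a : Fin l) (ω : SigmaA l A) (h : A a (ω.1 0) = 1) :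
    (consSeq a ω h).1 = consVal a ω := by
  funext n
  match n with
  | 0 => rfl
  | (k + 1) => rfl

theorem continuous_transferOp {φ f : SigmaA l A → ℝ} (hφ : Continuous φ) (hf : Continuous f) :
    Continuous (transferOp A φ f) := by
  unfold transferOp
  apply continuous_finset_sum
  intro a _
  rw [continuous_iff_continuousAt]
  intro ω
  by_cases h : A a (ω.1 0) = 1
  · -- define a total auxiliary map
    set Ψ : SigmaA l A → SigmaA l A := fun υ =>
      if h' : A a (υ.1 0) = 1 then consSeq a υ h' else ω with hΨ
    have hmem := agree_mem_nhds ω 1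
    have hev : ∀ᶠ υ in nhds ω, υ.1 0 = ω.1 0 := by
      filter_upwards [hmem] with υ hυ using hυ 0 (by omega)
    have hΨval : ∀ υ : SigmaA l A, υ.1 0 = ω.1 0 → (Ψ υ).1 = consVal a υ := by
      intro υ hυ
      have h' : A a (υ.1 0) = 1 := by rw [hυ]; exact h
      rw [hΨ]
      simp only [dif_pos h']
      exact consSeq_val a υ h'
    have hΨcont : ContinuousAt Ψ ω := by
      unfold ContinuousAt
      rw [tendsto_subtype_rng]
      have : (Ψ ω).1 = consVal a ω := hΨval ω rfl
      rw [this]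
      refine Filter.Tendsto.congr' ?_ ((continuous_consVal a).continuousAt)
      filter_upwards [hev] with υ hυ using (hΨval υ hυ).symm
    have hcont : ContinuousAt (fun υ => Real.exp (φ (Ψ υ)) * f (Ψ υ)) ω := by
      exact ((Real.continuous_exp.continuousAt.comp (hφ.continuousAt.comp hΨcont)).mul
        (hf.continuousAt.comp hΨcont))
    apply ContinuousAt.congr hcont
    filter_upwards [hev] with υ hυ
    have h' : A a (υ.1 0) = 1 := by rw [hυ]; exact h
    simp only [dif_pos h', hΨ]
  · have hev : ∀ᶠ υ in nhds ω, υ.1 0 = ω.1 0 := by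
      filter_upwards [agree_mem_nhds ω 1] with υ hυ using hυ 0 (by omega)
    apply ContinuousAt.congr (continuousAt_const (y := (0:ℝ)))
    filter_upwards [hev] with υ hυ
    have h' : ¬ A a (υ.1 0) = 1 := by rw [hυ]; exact h
    simp only [dif_neg h']

end TransferContinuity
section TransferAlgebra

variable {A : Matrix (Fin l) (Fin l) ℕ} {φ : SigmaA l A → ℝ}

theorem transferOp_nonneg {f : SigmaA l A → ℝ} (hf : ∀ υ, 0 ≤ f υ) (ω : SigmaA l A) :
    0 ≤ transferOp A φ f ω := by
  apply Finset.sum_nonneg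
  intro a _
  by_cases h : A a (ω.1 0) = 1
  · rw [dif_pos h]; exact mul_nonneg (Real.exp_pos _).le (hf _)
  · rw [dif_neg h]

theorem transferOp_term_nonneg {f : SigmaA l A → ℝ} (hf : ∀ υ, 0 ≤ f υ) (ω : SigmaA l A)
    (a : Fin l) : 0 ≤ (if h : A a (ω.1 0) = 1 then
      Real.exp (φ (consSeq a ω h)) * f (consSeq a ω h) else 0) := by
  by_cases h' : A a (ω.1 0) = 1
  · rw [dif_pos h']; exact mul_nonneg (Real.exp_pos _).le (hf _)
  · rw [dif_neg h']

theorem transferOp_single_le {f : SigmaA l A → ℝ} (hf : ∀ υ, 0 ≤ f υ) (ω : SigmaA l A)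
    (b : Fin l) (h : A b (ω.1 0) = 1) :
    Real.exp (φ (consSeq b ω h)) * f (consSeq b ω h) ≤ transferOp A φ f ω := by
  have := Finset.single_le_sum (f := fun a => if h : A a (ω.1 0) = 1 then
      Real.exp (φ (consSeq a ω h)) * f (consSeq a ω h) else 0)
    (fun a _ => transferOp_term_nonneg hf ω a) (Finset.mem_univ b)
  simp only [dif_pos h] at this; exact this

theorem transferOp_mul_const (c : ℝ) (f : SigmaA l A → ℝ) (ω : SigmaA l A) :
    transferOp A φ (fun υ => c * f υ) ω = c * transferOp A φ f ω := by
  unfold transferOp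
  rw [Finset.mul_sum]
  apply Finset.sum_congr rfl
  intro a _
  by_cases h : A a (ω.1 0) = 1
  · rw [dif_pos h, dif_pos h]; ring
  · rw [dif_neg h, dif_neg h]; ring

theorem transferOp_finset_sum {ι : Type*} (t : Finset ι) (F : ι → SigmaA l A → ℝ)
    (ω : SigmaA l A) :
    transferOp A φ (fun υ => ∑ k ∈ t, F k υ) ω = ∑ k ∈ t, transferOp A φ (F k) ω := by
  unfold transferOp
  rw [Finset.sum_comm]
  apply Finset.sum_congr rfl
  intro a _
  by_cases h : A a (ω.1 0) = 1
  · simp only [dif_pos h, Finset.mul_sum]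
  · simp only [dif_neg h, Finset.sum_const_zero]

theorem transferOp_mono {f g : SigmaA l A → ℝ} (hfg : ∀ υ, f υ ≤ g υ) (ω : SigmaA l A) :
    transferOp A φ f ω ≤ transferOp A φ g ω := by
  apply Finset.sum_le_sum
  intro a _
  by_cases h : A a (ω.1 0) = 1
  · rw [dif_pos h, dif_pos h]
    exact mul_le_mul_of_nonneg_left (hfg _) (Real.exp_pos _).le
  · rw [dif_neg h, dif_neg h]

theorem transferOp_add (f g : SigmaA l A → ℝ) (ω : SigmaA l A) :
    transferOp A φ (fun υ => f υ + g υ) ω = transferOp A φ f ω + transferOp A φ g ω := by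
  unfold transferOp
  rw [← Finset.sum_add_distrib]
  apply Finset.sum_congr rfl
  intro a _
  by_cases h : A a (ω.1 0) = 1
  · rw [dif_pos h, dif_pos h, dif_pos h]; ring
  · rw [dif_neg h, dif_neg h, dif_neg h]; ring

/-- the normalized transfer operator `λ⁻¹ L` -/
noncomputable def Nop (A : Matrix (Fin l) (Fin l) ℕ) (φ : SigmaA l A → ℝ) (lam : ℝ) :
    (SigmaA l A → ℝ) → (SigmaA l A → ℝ) := fun f ω => lam⁻¹ * transferOp A φ f ω

theorem Nop_mul_const {lam : ℝ} (c : ℝ) (f : SigmaA l A → ℝ) (ω : SigmaA l A) :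
    Nop A φ lam (fun υ => c * f υ) ω = c * Nop A φ lam f ω := by
  unfold Nop
  rw [transferOp_mul_const]
  ring

theorem Nop_finset_sum {lam : ℝ} {ι : Type*} (t : Finset ι) (F : ι → SigmaA l A → ℝ)
    (ω : SigmaA l A) :
    Nop A φ lam (fun υ => ∑ k ∈ t, F k υ) ω = ∑ k ∈ t, Nop A φ lam (F k) ω := by
  unfold Nop
  rw [transferOp_finset_sum, Finset.mul_sum]

theorem Nop_nonneg {lam : ℝ} (hlam : 0 < lam) {f : SigmaA l A → ℝ} (hf : ∀ υ, 0 ≤ f υ)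
    (ω : SigmaA l A) : 0 ≤ Nop A φ lam f ω := by
  have := transferOp_nonneg (φ := φ) hf ω
  unfold Nop
  positivity

theorem Nop_iter_nonneg {lam : ℝ} (hlam : 0 < lam) {f : SigmaA l A → ℝ} (hf : ∀ υ, 0 ≤ f υ)
    (n : ℕ) (ω : SigmaA l A) : 0 ≤ (Nop A φ lam)^[n] f ω := by
  induction n generalizing f ω with
  | zero => exact hf ω
  | succ n ih =>
    rw [Function.iterate_succ_apply]
    exact ih (Nop_nonneg hlam hf) ω

theorem Nop_continuous {lam : ℝ} (hφc : Continuous φ) {f : SigmaA l A → ℝ} (hf : Continuous f) :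
    Continuous (Nop A φ lam f) :=
  continuous_const.mul (continuous_transferOp hφc hf)

theorem Nop_iter_continuous {lam : ℝ} (hφc : Continuous φ) {f : SigmaA l A → ℝ}
    (hf : Continuous f) (n : ℕ) : Continuous ((Nop A φ lam)^[n] f) := by
  induction n generalizing f with
  | zero => exact hf
  | succ n ih =>
    rw [Function.iterate_succ_apply]
    exact ih (Nop_continuous hφc hf)

end TransferAlgebra
section Reg

variable {A : Matrix (Fin l) (Fin l) ℕ}

/-- the regularity class: log-oscillation on `m`-cylinders at geometric scale -/
def RegF (K rr : ℝ) (f : SigmaA l A → ℝ) : Prop :=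
  ∀ m : ℕ, 1 ≤ m → ∀ ω υ : SigmaA l A, (∀ i < m, ω.1 i = υ.1 i) →
    f ω ≤ Real.exp (K * rr ^ m) * f υ

theorem regF_one {K rr : ℝ} (hK : 0 ≤ K) (hrr : 0 ≤ rr) :
    RegF K rr (fun _ : SigmaA l A => (1:ℝ)) := by
  intro m _ ω υ _
  rw [mul_one]
  rw [Real.one_le_exp_iff]  -- might not exist
  positivity

theorem regF_transfer {φ : SigmaA l A → ℝ} {C s K lam : ℝ} (hlam : 0 < lam)
    (hC0 : 0 ≤ C) (hK0 : 0 ≤ K) (hs : 0 < s)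
    (hC : ∀ (ω υ : SigmaA l A) (n : ℕ), (∀ i < n, ω.1 i = υ.1 i) →
      |φ ω - φ υ| ≤ C * (2 : ℝ) ^ (-(s * n)))
    (hKrec : (C + K) * (2:ℝ) ^ (-s) ≤ K)
    {f : SigmaA l A → ℝ} (hf0 : ∀ υ, 0 ≤ f υ) (hf : RegF K ((2:ℝ) ^ (-s)) f) :
    RegF K ((2:ℝ) ^ (-s)) (Nop A φ lam f) := by
  set rr := (2:ℝ) ^ (-s) with hrrdef
  have hrr0 : 0 < rr := Real.rpow_pos_of_pos (by norm_num) _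
  intro m hm ω υ hagree
  have hhead : ω.1 0 = υ.1 0 := hagree 0 hm
  unfold Nop
  have key : transferOp A φ f ω ≤ Real.exp (K * rr ^ m) * transferOp A φ f υ := by
   unfold transferOp
   rw [Finset.mul_sum]
   apply Finset.sum_le_sum
   intro a _
   by_cases h : A a (υ.1 0) = 1
   · have h' : A a (ω.1 0) = 1 := by rw [hhead]; exact h
     rw [dif_pos h', dif_pos h]
     show Real.exp (φ (consSeq a ω h')) * f (consSeq a ω h') ≤
       Real.exp (K * rr ^ m) * (Real.exp (φ (consSeq a υ h)) * f (consSeq a υ h))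
     set x := consSeq a ω h'
     set y := consSeq a υ h
     have hagree' : ∀ i < m + 1, x.1 i = y.1 i := by
       intro i hi
       match i with
       | 0 => rfl
       | (k + 1) => exact hagree k (by omega)
     have hφbound : φ x - φ y ≤ C * rr ^ (m+1) := by
       have h1 := hC x y (m+1) hagree'
       have h2 : (2:ℝ) ^ (-(s * (m+1 : ℕ))) = rr ^ (m+1) := by
         rw [hrrdef, ← Real.rpow_natCast ((2:ℝ) ^ (-s)) (m+1), ← Real.rpow_mul (by norm_num)]
         ring_nf
       rw [h2] at h1
       exact (abs_le.mp h1).2  -- φ x - φ y ≤ ...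
     have hfbound : f x ≤ Real.exp (K * rr ^ (m+1)) * f y := hf (m+1) (by omega) x y hagree'
     calc Real.exp (φ x) * f x
         ≤ Real.exp (φ x) * (Real.exp (K * rr ^ (m+1)) * f y) :=
           mul_le_mul_of_nonneg_left hfbound (Real.exp_pos _).le
       _ = Real.exp (φ x - φ y) * Real.exp (K * rr ^ (m+1)) * (Real.exp (φ y) * f y) := by
           rw [Real.exp_sub]; field_simp
       _ ≤ Real.exp (C * rr ^ (m+1)) * Real.exp (K * rr ^ (m+1)) * (Real.exp (φ y) * f y) := by
           apply mul_le_mul_of_nonneg_right _ (mul_nonneg (Real.exp_pos _).le (hf0 _))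
           apply mul_le_mul_of_nonneg_right _ (Real.exp_pos _).le
           exact Real.exp_le_exp.mpr hφbound
       _ ≤ Real.exp (K * rr ^ m) * (Real.exp (φ y) * f y) := by
           apply mul_le_mul_of_nonneg_right _ (mul_nonneg (Real.exp_pos _).le (hf0 _))
           rw [← Real.exp_add]
           apply Real.exp_le_exp.mpr
           have : C * rr ^ (m+1) + K * rr ^ (m+1) = ((C + K) * rr) * rr ^ m := by ring
           rw [this]
           exact mul_le_mul_of_nonneg_right hKrec (by positivity)
   · have h' : ¬ A a (ω.1 0) = 1 := by rw [hhead]; exact h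
     rw [dif_neg h', dif_neg h, mul_zero]
  calc lam⁻¹ * transferOp A φ f ω
      ≤ lam⁻¹ * (Real.exp (K * rr ^ m) * transferOp A φ f υ) :=
        mul_le_mul_of_nonneg_left key (by positivity)
    _ = Real.exp (K * rr ^ m) * (lam⁻¹ * transferOp A φ f υ) := by ring

theorem regF_smul {K rr c : ℝ} (hc : 0 ≤ c) {f : SigmaA l A → ℝ} (hf : RegF K rr f) :
    RegF K rr (fun ω => c * f ω) := by
  intro m hm ω υ hagree
  have := hf m hm ω υ hagree
  calc c * f ω ≤ c * (Real.exp (K * rr ^ m) * f υ) := mul_le_mul_of_nonneg_left this hc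
    _ = Real.exp (K * rr ^ m) * (c * f υ) := by ring

theorem regF_sum {K rr : ℝ} {ι : Type*} (t : Finset ι) {F : ι → SigmaA l A → ℝ}
    (hF : ∀ k ∈ t, RegF K rr (F k)) :
    RegF K rr (fun ω => ∑ k ∈ t, F k ω) := by
  intro m hm ω υ hagree
  rw [Finset.mul_sum]
  exact Finset.sum_le_sum fun k hk => hF k hk m hm ω υ hagree

end Reg
section Lower

variable {A : Matrix (Fin l) (Fin l) ℕ} {φ : SigmaA l A → ℝ} {lam : ℝ}

theorem Nop_iter_lower (hlam : 0 < lam) (h01 : ∀ i j, A i j = 0 ∨ A i j = 1)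
    (mφ : ℝ) (hmφ : ∀ υ, mφ ≤ φ υ) {f : SigmaA l A → ℝ} (hf0 : ∀ υ, 0 ≤ f υ)
    (j : Fin l) (ε : ℝ) (hε : 0 ≤ ε) (hfj : ∀ υ, υ.1 0 = j → ε ≤ f υ) :
    ∀ (n : ℕ) (ω : SigmaA l A), 0 < (A ^ n) j (ω.1 0) →
      (Real.exp mφ / lam) ^ n * ε ≤ (Nop A φ lam)^[n] f ω := by
  intro n
  induction n with
  | zero =>
    intro ω h
    rw [pow_zero, Matrix.one_apply] at h
    split at h
    · rw [pow_zero, one_mul]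
      exact hfj ω (by simp_all)
    · simp at h
  | succ n ih =>
    intro ω h
    rw [pow_succ, Matrix.mul_apply] at h
    obtain ⟨b, hb⟩ : ∃ b, 0 < (A ^ n) j b * A b (ω.1 0) := by
      by_contra hcon
      push_neg at hcon
      simp only [Nat.le_zero] at hcon
      simp [Finset.sum_eq_zero fun b _ => hcon b] at h
    have hb1 : 0 < (A ^ n) j b := by
      rcases Nat.eq_zero_or_pos ((A ^ n) j b) with h0 | h2
      · simp [h0] at hb
      · exact h2
    have hb2 : A b (ω.1 0) = 1 := by
      rcases h01 b (ω.1 0) with h0 | h1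
      · simp [h0] at hb
      · exact h1
    set υ := consSeq b ω hb2 with hυ
    have hυ0 : υ.1 0 = b := rfl
    have hIH : (Real.exp mφ / lam) ^ n * ε ≤ (Nop A φ lam)^[n] f υ := by
      apply ih
      rw [hυ0]
      exact hb1
    have hg0 : ∀ x, 0 ≤ (Nop A φ lam)^[n] f x := Nop_iter_nonneg hlam hf0 n
    rw [Function.iterate_succ_apply']
    unfold Nop
    have hsingle : Real.exp (φ υ) * (Nop A φ lam)^[n] f υ ≤
        transferOp A φ ((Nop A φ lam)^[n] f) ω := transferOp_single_le hg0 ω b hb2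
    calc (Real.exp mφ / lam) ^ (n+1) * ε
        = lam⁻¹ * (Real.exp mφ * ((Real.exp mφ / lam) ^ n * ε)) := by
          ring
      _ ≤ lam⁻¹ * (Real.exp (φ υ) * (Nop A φ lam)^[n] f υ) := by
          apply mul_le_mul_of_nonneg_left _ (by positivity)
          apply mul_le_mul (Real.exp_le_exp.mpr (hmφ υ)) hIH (by positivity) (Real.exp_pos _).le
      _ ≤ lam⁻¹ * transferOp A φ ((Nop A φ lam)^[n] f) ω :=
          mul_le_mul_of_nonneg_left hsingle (by positivity)

/-- indicator of a one-letter cylinder -/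
def chi (A : Matrix (Fin l) (Fin l) ℕ) (j : Fin l) : SigmaA l A → ℝ := fun ω =>
  if ω.1 0 = j then 1 else 0

theorem continuous_chi (j : Fin l) : Continuous (chi A j) :=
  (continuous_of_discreteTopology (f := fun i : Fin l => if i = j then (1:ℝ) else 0)).comp
    (continuous_eval 0)

theorem chi_nonneg (j : Fin l) (ω : SigmaA l A) : 0 ≤ chi A j ω := by
  unfold chi; split <;> norm_num

end Lower
section Integral

variable {A : Matrix (Fin l) (Fin l) ℕ} {φ : SigmaA l A → ℝ} {lam : ℝ}
  {μ : Measure (SigmaA l A)} [IsProbabilityMeasure μ]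

theorem cont_integrable {f : SigmaA l A → ℝ} (hf : Continuous f) : Integrable f μ :=
  hf.integrable_of_hasCompactSupport (HasCompactSupport.of_compactSpace f)

theorem integral_Nop (hlam : lam ≠ 0)
    (heig : ∀ f : SigmaA l A → ℝ, Continuous f →
      ∫ ω, transferOp A φ f ω ∂μ = lam * ∫ ω, f ω ∂μ)
    {f : SigmaA l A → ℝ} (hf : Continuous f) :
    ∫ ω, Nop A φ lam f ω ∂μ = ∫ ω, f ω ∂μ := by
  unfold Nop
  rw [MeasureTheory.integral_const_mul, heig f hf, ← mul_assoc, inv_mul_cancel₀ hlam, one_mul]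

theorem integral_Nop_iter (hφc : Continuous φ) (hlam : lam ≠ 0)
    (heig : ∀ f : SigmaA l A → ℝ, Continuous f →
      ∫ ω, transferOp A φ f ω ∂μ = lam * ∫ ω, f ω ∂μ)
    {f : SigmaA l A → ℝ} (hf : Continuous f) (n : ℕ) :
    ∫ ω, (Nop A φ lam)^[n] f ω ∂μ = ∫ ω, f ω ∂μ := by
  induction n generalizing f with
  | zero => rfl
  | succ n ih =>
    rw [Function.iterate_succ_apply']
    rw [integral_Nop hlam heig (Nop_iter_continuous hφc hf n)]
    exact ih hf

theorem measurable_cylOne (j : Fin l) : MeasurableSet {ω : SigmaA l A | ω.1 0 = j} :=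
  (IsClosed.preimage (continuous_eval 0) (isClosed_discrete {j})).measurableSet

theorem chi_integral (j : Fin l) :
    ∫ ω, chi A j ω ∂μ = (μ {ω : SigmaA l A | ω.1 0 = j}).toReal := by
  have hch : chi A j = Set.indicator {ω : SigmaA l A | ω.1 0 = j} (fun _ => (1:ℝ)) := by
    funext ω
    rw [Set.indicator_apply]
    rfl
  rw [hch, MeasureTheory.integral_indicator_const _ (measurable_cylOne j), smul_eq_mul, mul_one]
  rfl

theorem chi_head (j : Fin l) (υ : SigmaA l A) (hυ : υ.1 0 = j) : (1:ℝ) ≤ chi A j υ := by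
  unfold chi
  rw [if_pos hυ]

/-- Each one-letter cylinder has positive measure. -/
theorem cylOne_pos (hA : Primitive A) (hlam : 0 < lam) (hφc : Continuous φ)
    (mφ : ℝ) (hmφ : ∀ υ, mφ ≤ φ υ)
    (heig : ∀ f : SigmaA l A → ℝ, Continuous f →
      ∫ ω, transferOp A φ f ω ∂μ = lam * ∫ ω, f ω ∂μ)
    (j : Fin l) : 0 < (μ {ω : SigmaA l A | ω.1 0 = j}).toReal := by
  obtain ⟨h01, n, hn, hpos⟩ := hA
  have hlow : ∀ ω : SigmaA l A, (Real.exp mφ / lam) ^ n * 1 ≤ (Nop A φ lam)^[n] (chi A j) ω := by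
    intro ω
    exact Nop_iter_lower hlam h01 mφ hmφ (chi_nonneg j) j 1 zero_le_one (chi_head j) n ω
      (hpos j (ω.1 0))
  have hint : ∫ ω, (Nop A φ lam)^[n] (chi A j) ω ∂μ = (μ {ω : SigmaA l A | ω.1 0 = j}).toReal := by
    rw [integral_Nop_iter hφc hlam.ne' heig (continuous_chi j) n, chi_integral j]
  have hmono : (Real.exp mφ / lam) ^ n * 1 ≤ ∫ ω, (Nop A φ lam)^[n] (chi A j) ω ∂μ := by
    have := MeasureTheory.integral_mono (μ := μ)
      (integrable_const ((Real.exp mφ / lam) ^ n * 1))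
      (cont_integrable (Nop_iter_continuous hφc (continuous_chi j) n)) hlow
    simpa using this
  rw [hint] at hmono
  calc (0:ℝ) < (Real.exp mφ / lam) ^ n * 1 := by positivity
    _ ≤ _ := hmono

end Integral
section SupBound

variable {A : Matrix (Fin l) (Fin l) ℕ} {φ : SigmaA l A → ℝ} {lam : ℝ}
  {μ : Measure (SigmaA l A)} [IsProbabilityMeasure μ]

/-- The uniform bound for normalized functions in the regularity class. -/
noncomputable def Mbound (A : Matrix (Fin l) (Fin l) ℕ) (μ : Measure (SigmaA l A))
    (K rr : ℝ) : ℝ :=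
  Real.exp (K * rr) * ∑ j : Fin l, ((μ {ω : SigmaA l A | ω.1 0 = j}).toReal)⁻¹

theorem sup_bound {K rr : ℝ} (hrr : 0 < rr)
    (hcyl : ∀ j : Fin l, 0 < (μ {ω : SigmaA l A | ω.1 0 = j}).toReal)
    {f : SigmaA l A → ℝ} (hf : Continuous f) (hf0 : ∀ υ, 0 ≤ f υ) (hreg : RegF K rr f)
    (hint : ∫ ω, f ω ∂μ = 1) (ω : SigmaA l A) : f ω ≤ Mbound A μ K rr := by
  set j := ω.1 0 with hj
  set S : Set (SigmaA l A) := {υ : SigmaA l A | υ.1 0 = j} with hS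
  have hlow : ∀ υ ∈ S, Real.exp (-(K * rr)) * f ω ≤ f υ := by
    intro υ hυ
    have hagree : ∀ i < 1, ω.1 i = υ.1 i := by
      intro i hi
      interval_cases i
      exact hυ.symm
    have := hreg 1 le_rfl ω υ hagree
    rw [pow_one] at this
    rw [Real.exp_neg]
    rw [inv_mul_le_iff₀ (Real.exp_pos _)] at *
    calc f ω ≤ Real.exp (K * rr) * f υ := this
      _ = _ := by ring
  have hmeas : MeasurableSet S := measurable_cylOne j
  have h1 : (μ S).toReal * (Real.exp (-(K * rr)) * f ω) ≤ ∫ υ in S, f υ ∂μ := by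
    have hc : ∫ _ in S, (Real.exp (-(K * rr)) * f ω) ∂μ
        = (μ S).toReal * (Real.exp (-(K * rr)) * f ω) := by
      rw [MeasureTheory.setIntegral_const, smul_eq_mul]
      rfl
    rw [← hc]
    apply MeasureTheory.setIntegral_mono_on
      ((MeasureTheory.integrable_const _).integrableOn)
      ((cont_integrable hf).integrableOn) hmeas
    exact hlow
  have h2 : ∫ υ in S, f υ ∂μ ≤ 1 := by
    rw [← hint]
    exact MeasureTheory.setIntegral_le_integral (cont_integrable hf)
      (Filter.Eventually.of_forall hf0)
  have h3 : (μ S).toReal * (Real.exp (-(K * rr)) * f ω) ≤ 1 := h1.trans h2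
  have hpos : 0 < (μ S).toReal := hcyl j
  have h4 : f ω ≤ Real.exp (K * rr) * ((μ S).toReal)⁻¹ := by
    rw [Real.exp_neg] at h3
    rw [← mul_le_mul_iff_of_pos_left (show 0 < (Real.exp (K * rr))⁻¹ * (μ S).toReal by positivity)]
    calc (Real.exp (K * rr))⁻¹ * (μ S).toReal * f ω
        = (μ S).toReal * ((Real.exp (K * rr))⁻¹ * f ω) := by ring
      _ ≤ 1 := h3
      _ = (Real.exp (K * rr))⁻¹ * (μ S).toReal *
            (Real.exp (K * rr) * ((μ S).toReal)⁻¹) := by field_simp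
  calc f ω ≤ Real.exp (K * rr) * ((μ S).toReal)⁻¹ := h4
    _ ≤ Mbound A μ K rr := by
      unfold Mbound
      apply mul_le_mul_of_nonneg_left _ (Real.exp_pos _).le
      exact Finset.single_le_sum (f := fun j : Fin l => ((μ {ω : SigmaA l A | ω.1 0 = j}).toReal)⁻¹)
        (fun i _ => by positivity) (Finset.mem_univ j)

theorem Mbound_nonneg {K rr : ℝ} : 0 ≤ Mbound A μ K rr := by
  unfold Mbound
  have : (0:ℝ) ≤ ∑ j : Fin l, ((μ {ω : SigmaA l A | ω.1 0 = j}).toReal)⁻¹ :=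
    Finset.sum_nonneg fun j _ => by positivity
  positivity

end SupBound
section TotBdd

variable {A : Matrix (Fin l) (Fin l) ℕ}

/-- the compact class of candidate densities, inside `C(Σ_A, ℝ)` -/
def goodSet (A : Matrix (Fin l) (Fin l) ℕ) (K rr M : ℝ) : Set C(SigmaA l A, ℝ) :=
  {F | (∀ ω, 0 ≤ F ω ∧ F ω ≤ M) ∧ RegF K rr (F : SigmaA l A → ℝ)}

theorem totallyBounded_goodSet {K rr M : ℝ} (hrr0 : 0 < rr) (hrr1 : rr < 1) (hK0 : 0 ≤ K)
    (hM0 : 0 ≤ M) : TotallyBounded (goodSet A K rr M) := by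
  classical
  rw [Metric.totallyBounded_iff]
  intro ε hε
  -- choose m
  obtain ⟨m, hm1, hm⟩ : ∃ m : ℕ, 1 ≤ m ∧ M * (Real.exp (K * rr ^ m) - 1) < ε / 3 := by
    have h1 : Filter.Tendsto (fun m : ℕ => M * (Real.exp (K * rr ^ m) - 1))
        Filter.atTop (nhds 0) := by
      have h2 : Filter.Tendsto (fun m : ℕ => rr ^ m) Filter.atTop (nhds 0) :=
        tendsto_pow_atTop_nhds_zero_of_lt_one hrr0.le hrr1
      have h3 : Filter.Tendsto (fun m : ℕ => M * (Real.exp (K * rr ^ m) - 1))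
          Filter.atTop (nhds (M * (Real.exp (K * 0) - 1))) := by
        apply Filter.Tendsto.const_mul
        apply Filter.Tendsto.sub_const
        exact (Real.continuous_exp.tendsto _).comp ((h2.const_mul K).congr (fun n => by ring))
      simpa using h3
    have h4 := (h1.eventually (gt_mem_nhds (by positivity : (0:ℝ) < ε / 3))).and
      (Filter.eventually_ge_atTop 1)
    obtain ⟨m, hm⟩ := h4.exists
    exact ⟨m, hm.2, hm.1⟩
  -- choose a grid on [0, M]
  obtain ⟨G, hGfin, hGcov⟩ := (Metric.totallyBounded_iff.mp (totallyBounded_Icc (0:ℝ) M))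
    (ε/3) (by positivity)
  -- the candidate piecewise-constant functions
  have hcontp : ∀ p : (Fin m → Fin l) → ℝ, Continuous fun ω : SigmaA l A =>
      p (fun i : Fin m => ω.1 i) := by
    intro p
    exact (continuous_of_discreteTopology (f := p)).comp
      (continuous_pi fun i : Fin m => continuous_eval (i : ℕ))
  let Fp : ((Fin m → Fin l) → ℝ) → C(SigmaA l A, ℝ) := fun p =>
    ⟨fun ω => p (fun i : Fin m => ω.1 i), hcontp p⟩
  refine ⟨Fp '' (Set.univ.pi fun _ => G), Set.Finite.image _ ((Set.Finite.pi fun _ => hGfin)), ?_⟩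
  intro F hF
  obtain ⟨hFb, hFreg⟩ := hF
  -- choose representative values
  have hval : ∀ w : Fin m → Fin l, ∃ g ∈ G,
      dist (if hw : ∃ ω : SigmaA l A, ∀ i : Fin m, ω.1 (i : ℕ) = w i
        then F hw.choose else 0) g < ε/3 := by
    intro w
    have hmem : (if hw : ∃ ω : SigmaA l A, ∀ i : Fin m, ω.1 (i : ℕ) = w i
        then F hw.choose else 0) ∈ Set.Icc (0:ℝ) M := by
      split
      · exact ⟨(hFb _).1, (hFb _).2⟩
      · exact ⟨le_rfl, hM0⟩
    have := hGcov hmem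
    simp only [Set.mem_iUnion, Metric.mem_ball] at this
    obtain ⟨g, hg, hdist⟩ := this
    exact ⟨g, hg, hdist⟩
  choose p hpG hpdist using hval
  refine Set.mem_iUnion₂.mpr ⟨Fp p, ⟨p, by simpa using hpG, rfl⟩, ?_⟩
  rw [Metric.mem_ball]
  have hle : dist F (Fp p) ≤ 2 * ε / 3 := by
    rw [ContinuousMap.dist_le (by positivity)]
    intro ω
    set w : Fin m → Fin l := fun i => ω.1 (i : ℕ) with hw
    have hex : ∃ ω' : SigmaA l A, ∀ i : Fin m, ω'.1 (i : ℕ) = w i := ⟨ω, fun i => rfl⟩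
    set ω' := hex.choose with hω'
    have hω'spec : ∀ i : Fin m, ω'.1 (i : ℕ) = w i := hex.choose_spec
    have hagree : ∀ i < m, ω'.1 i = ω.1 i := by
      intro i hi
      exact hω'spec ⟨i, hi⟩
    have hagree' : ∀ i < m, ω.1 i = ω'.1 i := fun i hi => (hagree i hi).symm
    have hexp1 : (1:ℝ) ≤ Real.exp (K * rr ^ m) := by
      rw [Real.one_le_exp_iff]
      positivity
    have hosc : |F ω - F ω'| ≤ M * (Real.exp (K * rr ^ m) - 1) := by
      rcases le_total (F ω) (F ω') with hc | hc
      · rw [abs_sub_comm, abs_of_nonneg (by linarith)]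
        have := hFreg m hm1 ω' ω hagree
        nlinarith [(hFb ω).1, (hFb ω).2]
      · rw [abs_of_nonneg (by linarith)]
        have := hFreg m hm1 ω ω' hagree'
        nlinarith [(hFb ω').1, (hFb ω').2]
    have hgrid := hpdist w
    rw [dif_pos hex] at hgrid
    have hFpω : (Fp p) ω = p w := rfl
    rw [Real.dist_eq] at hgrid ⊢
    rw [hFpω]
    calc |F ω - p w| ≤ |F ω - F ω'| + |F ω' - p w| := abs_sub_le _ _ _
      _ ≤ M * (Real.exp (K * rr ^ m) - 1) + ε / 3 := add_le_add hosc hgrid.le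
      _ ≤ ε / 3 + ε / 3 := by linarith
      _ ≤ 2 * ε / 3 := by linarith
  linarith [hle]

end TotBdd
section Existence

variable {A : Matrix (Fin l) (Fin l) ℕ}

theorem exists_eigenfunction
    (hl : 2 ≤ l) (hA : Primitive A)
    (φ : SigmaA l A → ℝ) (hφ : HolderCont φ)
    (lam : ℝ) (hlam : 0 < lam) (μ : Measure (SigmaA l A)) [IsProbabilityMeasure μ]
    (heig : ∀ f : SigmaA l A → ℝ, Continuous f →
      ∫ ω, transferOp A φ f ω ∂μ = lam * ∫ ω, f ω ∂μ) :
    ∃ h : SigmaA l A → ℝ,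
      Continuous h ∧ (∀ ω, 0 < h ω) ∧ (∀ ω, transferOp A φ h ω = lam * h ω) ∧
        ∫ ω, h ω ∂μ = 1 := by
  obtain ⟨C, s, hs, hC⟩ := hφ
  have hφc : Continuous φ := continuous_of_holder ⟨C, s, hs, hC⟩
  have hne : Nonempty (SigmaA l A) := nonempty_sigmaA hA hl
  obtain ⟨ω₀⟩ := hne
  have hC0 : 0 ≤ C := by
    have := hC ω₀ ω₀ 0 (by omega)
    simp only [sub_self, abs_zero, Nat.cast_zero, mul_zero, neg_zero, Real.rpow_zero,
      mul_one] at this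
    exact this
  set rr : ℝ := (2:ℝ) ^ (-s) with hrrdef
  have hrr0 : 0 < rr := Real.rpow_pos_of_pos (by norm_num) _
  have hrr1 : rr < 1 := by
    rw [hrrdef]
    apply Real.rpow_lt_one_of_one_lt_of_neg (by norm_num)
    linarith
  set K : ℝ := C * rr / (1 - rr) with hKdef
  have h1rr : 0 < 1 - rr := by linarith
  have hK0 : 0 ≤ K := by positivity
  have hK1 : K * (1 - rr) = C * rr := by
    rw [hKdef]
    field_simp
  have hKrec : (C + K) * rr ≤ K := by nlinarith [hK1]
  set mφ : ℝ := φ ω₀ - C with hmφdef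
  have hmφ : ∀ υ, mφ ≤ φ υ := by
    intro υ
    have := hC ω₀ υ 0 (by omega)
    simp only [Nat.cast_zero, mul_zero, neg_zero, Real.rpow_zero, mul_one] at this
    have := (abs_le.mp this).2
    rw [hmφdef]
    linarith
  have hcyl : ∀ j : Fin l, 0 < (μ {ω : SigmaA l A | ω.1 0 = j}).toReal :=
    cylOne_pos hA hlam hφc mφ hmφ heig
  set M : ℝ := Mbound A μ K rr with hMdef
  have hM0 : 0 ≤ M := Mbound_nonneg
  -- the iterates of the constant function 1
  set u : ℕ → SigmaA l A → ℝ := fun k => (Nop A φ lam)^[k] (fun _ => (1:ℝ)) with hudef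
  have hucont : ∀ k, Continuous (u k) := fun k => Nop_iter_continuous hφc continuous_const k
  have hu0 : ∀ k ω, 0 ≤ u k ω := fun k ω => Nop_iter_nonneg hlam (fun _ => zero_le_one) k ω
  have husucc : ∀ n, u (n+1) = Nop A φ lam (u n) := by
    intro n
    rw [hudef]
    exact Function.iterate_succ_apply' _ _ _
  have hureg : ∀ k, RegF K rr (u k) := by
    intro k
    induction k with
    | zero => exact regF_one hK0 hrr0.le
    | succ n ih =>
      rw [husucc]
      exact regF_transfer hlam hC0 hK0 hs hC hKrec (fun υ => hu0 n υ) ih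
  have huint : ∀ k, ∫ ω, u k ω ∂μ = 1 := by
    intro k
    rw [hudef]
    rw [integral_Nop_iter hφc hlam.ne' heig continuous_const k]
    simp
  have huM : ∀ k ω, u k ω ≤ M := fun k ω =>
    sup_bound hrr0 hcyl (hucont k) (hu0 k) (hureg k) (huint k) ω
  -- the Cesàro averages
  have hgcont : ∀ n : ℕ, Continuous fun ω => ((n:ℝ)+1)⁻¹ * ∑ k ∈ Finset.range (n+1), u k ω := by
    intro n
    exact continuous_const.mul (continuous_finset_sum _ fun k _ => hucont k)
  set g : ℕ → C(SigmaA l A, ℝ) := fun n =>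
    ⟨fun ω => ((n:ℝ)+1)⁻¹ * ∑ k ∈ Finset.range (n+1), u k ω, hgcont n⟩ with hgdef
  have hg_apply : ∀ n ω, g n ω = ((n:ℝ)+1)⁻¹ * ∑ k ∈ Finset.range (n+1), u k ω :=
    fun n ω => rfl
  have hginv0 : ∀ n : ℕ, (0:ℝ) ≤ ((n:ℝ)+1)⁻¹ := fun n => by positivity
  have hg0 : ∀ n ω, 0 ≤ g n ω := by
    intro n ω
    rw [hg_apply]
    exact mul_nonneg (hginv0 n) (Finset.sum_nonneg fun k _ => hu0 k ω)
  have hgM : ∀ n ω, g n ω ≤ M := by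
    intro n ω
    rw [hg_apply]
    calc ((n:ℝ)+1)⁻¹ * ∑ k ∈ Finset.range (n+1), u k ω
        ≤ ((n:ℝ)+1)⁻¹ * ∑ k ∈ Finset.range (n+1), M := by
          apply mul_le_mul_of_nonneg_left _ (hginv0 n)
          exact Finset.sum_le_sum fun k _ => huM k ω
      _ = M := by
          rw [Finset.sum_const, Finset.card_range, nsmul_eq_mul, Nat.cast_succ]
          field_simp
  have hgreg : ∀ n, RegF K rr (g n) := by
    intro n
    exact regF_smul (hginv0 n) (regF_sum _ fun k _ => hureg k)
  have hgmem : ∀ n, g n ∈ goodSet A K rr M := fun n => ⟨fun ω => ⟨hg0 n ω, hgM n ω⟩, hgreg n⟩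
  have hgint : ∀ n, ∫ ω, g n ω ∂μ = 1 := by
    intro n
    calc ∫ ω, g n ω ∂μ = ((n:ℝ)+1)⁻¹ * ∫ ω, ∑ k ∈ Finset.range (n+1), u k ω ∂μ := by
          rw [← MeasureTheory.integral_const_mul]
          rfl
      _ = ((n:ℝ)+1)⁻¹ * ∑ k ∈ Finset.range (n+1), ∫ ω, u k ω ∂μ := by
          rw [MeasureTheory.integral_finset_sum _ fun k _ => cont_integrable (hucont k)]
      _ = 1 := by
          simp only [huint]
          rw [Finset.sum_const, Finset.card_range, nsmul_eq_mul, Nat.cast_succ]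
          field_simp
  -- extract a convergent subsequence
  have hcomp : IsCompact (closure (goodSet A K rr M)) :=
    TotallyBounded.isCompact_of_isClosed
      (totallyBounded_goodSet hrr0 hrr1 hK0 hM0).closure isClosed_closure
  obtain ⟨H, hHmem, ψ, hψmono, hψtend⟩ :=
    hcomp.tendsto_subseq (fun n => subset_closure (hgmem n))
  have hpt : ∀ ω, Filter.Tendsto (fun k => g (ψ k) ω) Filter.atTop (nhds (H ω)) := by
    intro ω
    exact ((continuous_eval_const ω).tendsto H).comp hψtend
  have hH0 : ∀ ω, 0 ≤ H ω := by
    intro ω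
    exact ge_of_tendsto' (hpt ω) (fun k => hg0 (ψ k) ω)
  have hHreg : RegF K rr (H : SigmaA l A → ℝ) := by
    intro m hm ω υ hagree
    refine le_of_tendsto_of_tendsto' (hpt ω) ((hpt υ).const_mul (Real.exp (K * rr ^ m))) ?_
    intro k
    exact hgreg (ψ k) m hm ω υ hagree
  have hψtop : Filter.Tendsto ψ Filter.atTop Filter.atTop := hψmono.tendsto_atTop
  have hHint : ∫ ω, H ω ∂μ = 1 := by
    have hdom : Filter.Tendsto (fun k => ∫ ω, g (ψ k) ω ∂μ) Filter.atTop
        (nhds (∫ ω, H ω ∂μ)) := by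
      apply MeasureTheory.tendsto_integral_of_dominated_convergence (fun _ => M)
      · exact fun k => (cont_integrable (g (ψ k)).continuous).aestronglyMeasurable
      · exact MeasureTheory.integrable_const M
      · intro k
        apply Filter.Eventually.of_forall
        intro ω
        rw [Real.norm_eq_abs, abs_of_nonneg (hg0 (ψ k) ω)]
        exact hgM (ψ k) ω
      · exact Filter.Eventually.of_forall fun ω => hpt ω
    have hconst : Filter.Tendsto (fun k => ∫ ω, g (ψ k) ω ∂μ) Filter.atTop (nhds 1) := by
      have : (fun k => ∫ ω, g (ψ k) ω ∂μ) = fun _ => (1:ℝ) := funext fun k => hgint (ψ k)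
      rw [this]
      exact tendsto_const_nhds
    exact tendsto_nhds_unique hdom hconst
  -- the eigenvalue equation
  have hHfix : ∀ ω, Nop A φ lam (H : SigmaA l A → ℝ) ω = H ω := by
    intro ω
    -- `Nop` of the averages converges pointwise to `Nop H`
    have htermwise : Filter.Tendsto (fun k => Nop A φ lam (g (ψ k) : SigmaA l A → ℝ) ω)
        Filter.atTop (nhds (Nop A φ lam (H : SigmaA l A → ℝ) ω)) := by
      unfold Nop transferOp
      apply Filter.Tendsto.const_mul
      apply tendsto_finset_sum
      intro a _
      by_cases h : A a (ω.1 0) = 1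
      · simp only [dif_pos h]
        exact (hpt (consSeq a ω h)).const_mul _
      · simp only [dif_neg h]
        exact tendsto_const_nhds
    -- `Nop (g n) = g n + small error`
    have hNg : ∀ n : ℕ, Nop A φ lam (g n : SigmaA l A → ℝ) ω
        = g n ω + ((n:ℝ)+1)⁻¹ * (u (n+1) ω - u 0 ω) := by
      intro n
      have h1 : Nop A φ lam (g n : SigmaA l A → ℝ) ω
          = ((n:ℝ)+1)⁻¹ * ∑ k ∈ Finset.range (n+1), Nop A φ lam (u k) ω := by
        have : (g n : SigmaA l A → ℝ)
            = fun υ => ((n:ℝ)+1)⁻¹ * ∑ k ∈ Finset.range (n+1), u k υ := rfl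
        rw [this, Nop_mul_const, Nop_finset_sum]
      have h2 : ∀ k, Nop A φ lam (u k) ω = u (k+1) ω := by
        intro k
        rw [husucc k]
      rw [h1]
      simp only [h2]
      rw [hg_apply]
      have h3 : ∑ k ∈ Finset.range (n+1), u (k+1) ω
          = ∑ k ∈ Finset.range (n+1), u k ω + u (n+1) ω - u 0 ω := by
        have e1 := Finset.sum_range_succ' (fun k => u k ω) (n+1)
        have e2 := Finset.sum_range_succ (fun k => u k ω) (n+1)
        linarith
      rw [h3]
      ring
    have herr : Filter.Tendsto (fun k => ((ψ k:ℝ)+1)⁻¹ * (u (ψ k + 1) ω - u 0 ω))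
        Filter.atTop (nhds 0) := by
      have hbase : Filter.Tendsto (fun k => ((ψ k:ℝ)+1)⁻¹ * (M + 1)) Filter.atTop (nhds 0) := by
        have hb2 : Filter.Tendsto (fun n : ℕ => ((n:ℝ)+1)⁻¹ * (M + 1)) Filter.atTop (nhds 0) := by
          have := (tendsto_one_div_add_atTop_nhds_zero_nat).mul_const (M + 1)
          simpa [one_div] using this
        exact hb2.comp hψtop
      refine squeeze_zero_norm (fun k => ?_) hbase
      · rw [Real.norm_eq_abs, abs_mul, abs_of_nonneg (hginv0 (ψ k))]
        apply mul_le_mul_of_nonneg_left _ (hginv0 (ψ k))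
        rw [abs_le]
        constructor
        · have := huM 0 ω
          have := hu0 (ψ k + 1) ω
          linarith
        · have := huM (ψ k + 1) ω
          have := hu0 0 ω
          linarith
    have hlim2 : Filter.Tendsto (fun k => Nop A φ lam (g (ψ k) : SigmaA l A → ℝ) ω)
        Filter.atTop (nhds (H ω)) := by
      have : (fun k => Nop A φ lam (g (ψ k) : SigmaA l A → ℝ) ω)
          = fun k => g (ψ k) ω + ((ψ k:ℝ)+1)⁻¹ * (u (ψ k + 1) ω - u 0 ω) :=
        funext fun k => hNg (ψ k)
      rw [this]
      simpa using (hpt ω).add herr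
    exact tendsto_nhds_unique htermwise hlim2
  -- positivity
  have hpos : ∀ ω, 0 < H ω := by
    obtain ⟨ω₁, hω₁⟩ : ∃ ω₁, 0 < H ω₁ := by
      by_contra hcon
      push_neg at hcon
      have : ∀ ω, H ω = 0 := fun ω => le_antisymm (hcon ω) (hH0 ω)
      have hz : ∫ ω, H ω ∂μ = 0 := by
        simp only [this]
        simp
      rw [hHint] at hz
      norm_num at hz
    set j₀ := ω₁.1 0 with hj₀
    set ε := Real.exp (-(K * rr)) * H ω₁ with hεdef
    have hε : 0 < ε := by
      rw [hεdef]
      positivity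
    have hεcyl : ∀ υ : SigmaA l A, υ.1 0 = j₀ → ε ≤ H υ := by
      intro υ hυ
      have hagree : ∀ i < 1, ω₁.1 i = υ.1 i := by
        intro i hi
        interval_cases i
        exact hυ.symm
      have := hHreg 1 le_rfl ω₁ υ hagree
      rw [pow_one] at this
      rw [hεdef, Real.exp_neg]
      rw [inv_mul_le_iff₀ (Real.exp_pos _)]
      exact this
    obtain ⟨h01, nA, hnA, hposA⟩ := hA
    intro ω
    have hiter : ∀ n, (Nop A φ lam)^[n] (H : SigmaA l A → ℝ) = H := by
      intro n
      induction n with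
      | zero => rfl
      | succ n ih =>
        rw [Function.iterate_succ_apply']
        rw [ih]
        exact funext hHfix
    have := Nop_iter_lower hlam h01 mφ hmφ hH0 j₀ ε hε.le hεcyl nA ω (hposA j₀ (ω.1 0))
    rw [hiter nA] at this
    calc (0:ℝ) < (Real.exp mφ / lam) ^ nA * ε := by positivity
      _ ≤ H ω := this
  refine ⟨H, H.continuous, hpos, ?_, hHint⟩
  intro ω
  have := hHfix ω
  unfold Nop at this
  field_simp at this
  linarith [this]

end Existence
section Uniqueness

variable {A : Matrix (Fin l) (Fin l) ℕ}

theorem consSeq_shift (υ : SigmaA l A) :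
    consSeq (υ.1 0) (shift υ) (υ.2 0) = υ := by
  apply Subtype.ext
  funext n
  match n with
  | 0 => rfl
  | (k + 1) => rfl

/-- If `g ≥ 0` is an eigenfunction vanishing at `x`, it vanishes on preimages of `x`. -/
theorem vanish_step {φ : SigmaA l A → ℝ} {lam : ℝ} (hlam : 0 < lam) {g : SigmaA l A → ℝ}
    (hg0 : ∀ υ, 0 ≤ g υ) (hfix : ∀ ω, transferOp A φ g ω = lam * g ω)
    {x y : SigmaA l A} (hx : g x = 0) (hxy : shift y = x) : g y = 0 := by
  have hsum : transferOp A φ g x = 0 := by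
    rw [hfix x, hx, mul_zero]
  unfold transferOp at hsum
  have hterms := (Finset.sum_eq_zero_iff_of_nonneg
    (fun a _ => transferOp_term_nonneg hg0 x a)).mp hsum
  have hb : A (y.1 0) (x.1 0) = 1 := by
    rw [← hxy]
    exact y.2 0
  have := hterms (y.1 0) (Finset.mem_univ _)
  rw [dif_pos hb] at this
  have hy : consSeq (y.1 0) x hb = y := by
    subst hxy
    exact consSeq_shift y
  rw [hy] at this
  rcases mul_eq_zero.mp this with h | h
  · exact absurd h (Real.exp_ne_zero _)
  · exact h

theorem vanish_iterate {φ : SigmaA l A → ℝ} {lam : ℝ} (hlam : 0 < lam) {g : SigmaA l A → ℝ}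
    (hg0 : ∀ υ, 0 ≤ g υ) (hfix : ∀ ω, transferOp A φ g ω = lam * g ω)
    {x : SigmaA l A} (hx : g x = 0) :
    ∀ (n : ℕ) (υ : SigmaA l A), shift^[n] υ = x → g υ = 0 := by
  intro n
  induction n with
  | zero =>
    intro υ h
    rw [Function.iterate_zero_apply] at h
    rwa [h]
  | succ n ih =>
    intro υ h
    rw [Function.iterate_succ_apply] at h
    have h1 : g (shift υ) = 0 := ih (shift υ) h
    exact vanish_step hlam hg0 hfix h1 rfl

/-- Preimages of any point are dense: every point is approximated by points that are
eventually mapped to `x`. -/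
theorem dense_preimages (hA : Primitive A) (x ω : SigmaA l A) (m : ℕ) :
    ∃ υ : SigmaA l A, (∀ i < m, υ.1 i = ω.1 i) ∧ ∃ n : ℕ, shift^[n] υ = x := by
  obtain ⟨h01, nA, hnA, hposA⟩ := hA
  obtain ⟨c', hc'0, hc'n, hc's⟩ := path_of_pow h01 nA (ω.1 m) (x.1 0) (hposA _ _)
  set c : ℕ → Fin l := fun k => if k ≤ m then ω.1 k else c' (k - m) with hcdef
  have hc : ∀ k < m + nA, A (c k) (c (k + 1)) = 1 := by
    intro k hk
    rcases Nat.lt_or_ge k m with h | h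
    · rw [hcdef]
      simp only [if_pos (by omega : k ≤ m), if_pos (by omega : k + 1 ≤ m)]
      exact ω.2 k
    · have hck : c k = c' (k - m) := by
        rcases Nat.eq_or_lt_of_le h with heq | hlt
        · subst heq
          rw [hcdef]
          simp only [if_pos le_rfl, Nat.sub_self, hc'0]
        · rw [hcdef]
          simp only [if_neg (by omega : ¬ k ≤ m)]
      have hck1 : c (k + 1) = c' (k + 1 - m) := by
        rw [hcdef]
        simp only [if_neg (by omega : ¬ k + 1 ≤ m)]
      rw [hck, hck1]
      have : k + 1 - m = (k - m) + 1 := by omega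
      rw [this]
      exact hc's (k - m) (by omega)
  have hlast : c (m + nA) = x.1 0 := by
    rw [hcdef]
    simp only [if_neg (by omega : ¬ m + nA ≤ m)]
    have : m + nA - m = nA := by omega
    rw [this, hc'n]
  refine ⟨glue c (m + nA) x hc hlast, ?_, m + nA, glue_shift c (m + nA) x hc hlast⟩
  intro i hi
  rw [glue_prefix c (m + nA) x hc hlast i (by omega)]
  rw [hcdef]
  simp only [if_pos (by omega : i ≤ m)]

end Uniqueness
section UniqueMain

variable {A : Matrix (Fin l) (Fin l) ℕ}

theorem eigenfunction_unique_aux (hl : 2 ≤ l) (hA : Primitive A)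
    {φ : SigmaA l A → ℝ} (hφc : Continuous φ) {lam : ℝ} (hlam : 0 < lam)
    (μ : Measure (SigmaA l A)) [IsProbabilityMeasure μ]
    {h1 h2 : SigmaA l A → ℝ}
    (hc1 : Continuous h1) (hp1 : ∀ ω, 0 < h1 ω)
    (hf1 : ∀ ω, transferOp A φ h1 ω = lam * h1 ω) (hi1 : ∫ ω, h1 ω ∂μ = 1)
    (hc2 : Continuous h2) (hp2 : ∀ ω, 0 < h2 ω)
    (hf2 : ∀ ω, transferOp A φ h2 ω = lam * h2 ω) (hi2 : ∫ ω, h2 ω ∂μ = 1) :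
    h1 = h2 := by
  haveI hne : Nonempty (SigmaA l A) := nonempty_sigmaA hA hl
  set q : SigmaA l A → ℝ := fun ω => h1 ω / h2 ω with hqdef
  have hqc : Continuous q := hc1.div hc2 fun ω => (hp2 ω).ne'
  obtain ⟨ωm, -, hmin⟩ := isCompact_univ.exists_isMinOn Set.univ_nonempty hqc.continuousOn
  have hminle : ∀ υ, q ωm ≤ q υ := fun υ => hmin (Set.mem_univ υ)
  set t : ℝ := q ωm with htdef
  set g : SigmaA l A → ℝ := fun ω => h1 ω + (-t) * h2 ω with hgdef
  have hg0 : ∀ υ, 0 ≤ g υ := by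
    intro υ
    have h := hminle υ
    rw [htdef] at h
    have := (le_div_iff₀ (hp2 υ)).mp h
    rw [hgdef]
    simp only
    linarith
  have hgc : Continuous g := hc1.add (continuous_const.mul hc2)
  have hgfix : ∀ ω, transferOp A φ g ω = lam * g ω := by
    intro ω
    rw [hgdef]
    simp only
    rw [transferOp_add, transferOp_mul_const, hf1, hf2]
    ring
  have hgx : g ωm = 0 := by
    rw [hgdef]
    simp only [htdef, hqdef]
    field_simp [(hp2 ωm).ne']
    ring
  have hgz : ∀ ω, g ω = 0 := by
    intro ω
    have hseq : ∀ m : ℕ, ∃ υ : SigmaA l A, (∀ i < m, υ.1 i = ω.1 i) ∧ g υ = 0 := by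
      intro m
      obtain ⟨υ, hag, n, hsh⟩ := dense_preimages hA ωm ω m
      exact ⟨υ, hag, vanish_iterate hlam hg0 hgfix hgx n υ hsh⟩
    choose seqv hagree hzero using hseq
    have hconv : Filter.Tendsto seqv Filter.atTop (nhds ω) := by
      rw [tendsto_subtype_rng]
      rw [tendsto_pi_nhds]
      intro i
      have hev : ∀ᶠ m in Filter.atTop, (seqv m).1 i = ω.1 i :=
        Filter.eventually_atTop.mpr ⟨i+1, fun m hm => hagree m i (by omega)⟩
      exact Filter.Tendsto.congr' (by filter_upwards [hev] with m hm using hm.symm)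
        tendsto_const_nhds
    have h1' : Filter.Tendsto (fun m => g (seqv m)) Filter.atTop (nhds (g ω)) :=
      (hgc.continuousAt.tendsto).comp hconv
    have h2' : Filter.Tendsto (fun m => g (seqv m)) Filter.atTop (nhds 0) := by
      have : (fun m => g (seqv m)) = fun _ => (0:ℝ) := funext fun m => hzero m
      rw [this]
      exact tendsto_const_nhds
    exact tendsto_nhds_unique h1' h2'
  have hint : (0:ℝ) = 1 + (-t) * 1 := by
    have hgi : ∫ ω, g ω ∂μ = 0 := by
      have : g = fun _ => (0:ℝ) := funext hgz
      rw [this]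
      simp
    rw [hgdef] at hgi
    rw [MeasureTheory.integral_add (cont_integrable hc1)
      ((cont_integrable hc2).const_mul _)] at hgi
    rw [MeasureTheory.integral_const_mul, hi1, hi2] at hgi
    linarith
  have ht1 : t = 1 := by linarith
  funext ω
  have := hgz ω
  rw [hgdef] at this
  simp only [ht1] at this
  linarith

end UniqueMain
/-- For the unique pair `(λ, μ)` with `∫ L_φ f dμ = λ ∫ f dμ` for all
continuous `f`, there is a unique continuous strictly positive `h` with `L_φ h = λ h` and
`∫ h dμ = 1`. -/
theorem transfer_eigenfunction_unique
    (hl : 2 ≤ l) (A : Matrix (Fin l) (Fin l) ℕ) (hA : Primitive A)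
    (φ : SigmaA l A → ℝ) (hφ : HolderCont φ)
    (lam : ℝ) (hlam : 0 < lam) (μ : Measure (SigmaA l A)) [IsProbabilityMeasure μ]
    (heig : ∀ f : SigmaA l A → ℝ, Continuous f →
      ∫ ω, transferOp A φ f ω ∂μ = lam * ∫ ω, f ω ∂μ) :
    ∃! h : SigmaA l A → ℝ,
      Continuous h ∧ (∀ ω, 0 < h ω) ∧ (∀ ω, transferOp A φ h ω = lam * h ω) ∧
        ∫ ω, h ω ∂μ = 1 := by
  obtain ⟨h, hc, hp, hf, hi⟩ := exists_eigenfunction hl hA φ hφ lam hlam μ heig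
  refine ⟨h, ⟨hc, hp, hf, hi⟩, ?_⟩
  rintro h' ⟨hc', hp', hf', hi'⟩
  exact eigenfunction_unique_aux hl hA (continuous_of_holder hφ) hlam μ
    hc' hp' hf' hi' hc hp hf hi

end SFT
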